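/- Let π ∝ exp(−U) and π_μ ∝ exp(−U_μ) be probability densities on ℝ^d such that |U_μ(x) − U(x)| ≤ M for all x with 0 ≤ M ≤ 0.05, and suppose ∫‖x‖² π(x) dx = E₂ < ∞. Then the squared 2-Wasserstein distance satisfies W₂²(π, π_μ) ≤ 2(2M + e^{2M} − 1) E₂ ≤ 8.24 M E₂. -/

import Mathlib

open Real MeasureTheory
open scoped ENNReal

noncomputable def W2sq {d : ℕ} (μ ν : Measure (EuclideanSpace ℝ (Fin d))) : ℝ :=
  sInf { c : ℝ | ∃ γ : Measure (EuclideanSpace ℝ (Fin d) × EuclideanSpace ℝ (Fin d)),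
    IsProbabilityMeasure γ ∧ γ.map Prod.fst = μ ∧ γ.map Prod.snd = ν ∧
    c = ∫ z, ‖z.1 - z.2‖ ^ 2 ∂γ }

lemma W2sq_bddBelow {d : ℕ} (μ ν : Measure (EuclideanSpace ℝ (Fin d))) :
    BddBelow { c : ℝ | ∃ γ : Measure (EuclideanSpace ℝ (Fin d) × EuclideanSpace ℝ (Fin d)),
      IsProbabilityMeasure γ ∧ γ.map Prod.fst = μ ∧ γ.map Prod.snd = ν ∧
      c = ∫ z, ‖z.1 - z.2‖ ^ 2 ∂γ } := by
  refine ⟨0, ?_⟩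
  rintro c ⟨γ, -, -, -, rfl⟩
  exact integral_nonneg fun z => by positivity

lemma aux_W2 (d : ℕ) (f g : EuclideanSpace ℝ (Fin d) → ℝ) (A B E : ℝ)
    (hA : 0 ≤ A) (hB : 0 ≤ B) (hE : 0 ≤ E)
    (hf0 : ∀ x, 0 ≤ f x) (hg0 : ∀ x, 0 ≤ g x)
    (hfi : Integrable f) (hgi : Integrable g)
    (hf1 : ∫ x, f x = 1) (hg1 : ∫ x, g x = 1)
    (hlow : ∀ x, f x - g x ≤ A * f x) (hup : ∀ x, g x - f x ≤ B * f x)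
    (hEi : Integrable (fun x : EuclideanSpace ℝ (Fin d) => ‖x‖ ^ 2 * f x))
    (hEv : ∫ x : EuclideanSpace ℝ (Fin d), ‖x‖ ^ 2 * f x = E) :
    W2sq (volume.withDensity fun x => ENNReal.ofReal (f x))
      (volume.withDensity fun x => ENNReal.ofReal (g x)) ≤ 2 * (A + B) * E := by
  classical
  set F : EuclideanSpace ℝ (Fin d) → ℝ≥0∞ := fun x => ENNReal.ofReal (f x) with hFdef
  set G : EuclideanSpace ℝ (Fin d) → ℝ≥0∞ := fun x => ENNReal.ofReal (g x) with hGdef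
  have hFa : AEMeasurable F volume :=
    ENNReal.measurable_ofReal.comp_aemeasurable hfi.aemeasurable
  have hGa : AEMeasurable G volume :=
    ENNReal.measurable_ofReal.comp_aemeasurable hgi.aemeasurable
  set F' : EuclideanSpace ℝ (Fin d) → ℝ≥0∞ := hFa.mk F with hF'def
  set G' : EuclideanSpace ℝ (Fin d) → ℝ≥0∞ := hGa.mk G with hG'def
  have hF'm : Measurable F' := hFa.measurable_mk
  have hG'm : Measurable G' := hGa.measurable_mk
  have hFae : F =ᵐ[volume] F' := hFa.ae_eq_mk
  have hGae : G =ᵐ[volume] G' := hGa.ae_eq_mk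
  have hμF : volume.withDensity F = volume.withDensity F' := withDensity_congr_ae hFae
  have hμG : volume.withDensity G = volume.withDensity G' := withDensity_congr_ae hGae
  -- total masses
  have hFint : ∫⁻ x, F' x = 1 := by
    rw [← lintegral_congr_ae hFae]
    rw [hFdef]
    rw [← ofReal_integral_eq_lintegral_ofReal hfi (ae_of_all _ hf0), hf1]
    simp
  have hGint : ∫⁻ x, G' x = 1 := by
    rw [← lintegral_congr_ae hGae]
    rw [hGdef]
    rw [← ofReal_integral_eq_lintegral_ofReal hgi (ae_of_all _ hg0), hg1]
    simp
  set n2 : EuclideanSpace ℝ (Fin d) → ℝ≥0∞ := fun x => ENNReal.ofReal (‖x‖ ^ 2) with hn2def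
  have hn2m : Measurable n2 := by
    exact ENNReal.measurable_ofReal.comp ((measurable_norm).pow_const 2)
  have hFE : ∫⁻ x, n2 x * F' x = ENNReal.ofReal E := by
    have h1 : (fun x => n2 x * F' x) =ᵐ[volume] fun x => ENNReal.ofReal (‖x‖ ^ 2 * f x) := by
      filter_upwards [hFae] with x hx
      rw [← hx, hFdef, hn2def, ENNReal.ofReal_mul (by positivity)]
    rw [lintegral_congr_ae h1, ← ofReal_integral_eq_lintegral_ofReal hEi
      (ae_of_all _ fun x => by have := hf0 x; positivity), hEv]
  -- min and residual densities
  set m : EuclideanSpace ℝ (Fin d) → ℝ≥0∞ := fun x => min (F' x) (G' x) with hmdef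
  set p : EuclideanSpace ℝ (Fin d) → ℝ≥0∞ := fun x => F' x - m x with hpdef
  set q : EuclideanSpace ℝ (Fin d) → ℝ≥0∞ := fun x => G' x - m x with hqdef
  have hmm : Measurable m := hF'm.min hG'm
  have hpm : Measurable p := hF'm.sub hmm
  have hqm : Measurable q := hG'm.sub hmm
  have hmleF : ∀ x, m x ≤ F' x := fun x => min_le_left _ _
  have hmleG : ∀ x, m x ≤ G' x := fun x => min_le_right _ _
  have hmp : (fun x => m x + p x) = F' := by
    funext x
    exact add_tsub_cancel_of_le (hmleF x)
  have hmq : (fun x => m x + q x) = G' := by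
    funext x
    exact add_tsub_cancel_of_le (hmleG x)
  have hmint_le : ∫⁻ x, m x ≤ 1 := by
    rw [← hFint]; exact lintegral_mono hmleF
  have hmint_ne : ∫⁻ x, m x ≠ ⊤ := (lt_of_le_of_lt hmint_le ENNReal.one_lt_top).ne
  set ε : ℝ≥0∞ := ∫⁻ x, p x with hεdef
  have hpint : ε = 1 - ∫⁻ x, m x := by
    rw [hεdef, ← hFint]
    exact lintegral_sub' hmm.aemeasurable hmint_ne (ae_of_all _ hmleF)
  have hqε : ∫⁻ x, q x = ε := by
    rw [hpint, ← hGint]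
    exact lintegral_sub' hmm.aemeasurable hmint_ne (ae_of_all _ hmleG)
  have hεle : ε ≤ 1 := by rw [hpint]; exact tsub_le_self
  have hεne : ε ≠ ⊤ := (lt_of_le_of_lt hεle ENNReal.one_lt_top).ne
  -- pointwise ae bounds on p and q
  have hpA : p ≤ᵐ[volume] fun x => ENNReal.ofReal A * F' x := by
    filter_upwards [hFae, hGae] with x hFx hGx
    have h1 : p x = F' x - G' x := tsub_min
    have h2 : F' x = ENNReal.ofReal (f x) := hFx.symm
    have h3 : G' x = ENNReal.ofReal (g x) := hGx.symm
    rw [h1, h2, h3, ← ENNReal.ofReal_sub _ (hg0 x), ← ENNReal.ofReal_mul hA]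
    exact ENNReal.ofReal_le_ofReal (hlow x)
  have hqB : q ≤ᵐ[volume] fun x => ENNReal.ofReal B * F' x := by
    filter_upwards [hFae, hGae] with x hFx hGx
    have h1 : q x = G' x - F' x := by
      show G' x - F' x ⊓ G' x = G' x - F' x
      rw [inf_comm]; exact tsub_min
    have h2 : F' x = ENNReal.ofReal (f x) := hFx.symm
    have h3 : G' x = ENNReal.ofReal (g x) := hGx.symm
    rw [h1, h2, h3, ← ENNReal.ofReal_sub _ (hf0 x), ← ENNReal.ofReal_mul hB]
    exact ENNReal.ofReal_le_ofReal (hup x)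
  -- measures
  set μm := volume.withDensity m with hμmdef
  set μp := volume.withDensity p with hμpdef
  set μq := volume.withDensity q with hμqdef
  haveI : IsFiniteMeasure μp :=
    isFiniteMeasure_withDensity (by rw [← hεdef]; exact hεne)
  haveI : IsFiniteMeasure μq :=
    isFiniteMeasure_withDensity (by rw [hqε]; exact hεne)
  haveI : IsFiniteMeasure μm := isFiniteMeasure_withDensity hmint_ne
  have hμmuniv : μm Set.univ = ∫⁻ x, m x := by
    rw [hμmdef, withDensity_apply _ MeasurableSet.univ, setLIntegral_univ]
  have hμpuniv : μp Set.univ = ε := by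
    rw [hμpdef, withDensity_apply _ MeasurableSet.univ, setLIntegral_univ, hεdef]
  have hμquniv : μq Set.univ = ε := by
    rw [hμqdef, withDensity_apply _ MeasurableSet.univ, setLIntegral_univ, hqε]
  -- moment bounds
  have hIp : ∫⁻ x, n2 x ∂μp ≤ ENNReal.ofReal A * ENNReal.ofReal E := by
    rw [hμpdef, lintegral_withDensity_eq_lintegral_mul _ hpm hn2m]
    calc ∫⁻ x, (p * n2) x ≤ ∫⁻ x, (ENNReal.ofReal A * F' x) * n2 x := by
          refine lintegral_mono_ae ?_
          filter_upwards [hpA] with x hx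
          exact mul_le_mul_left hx _
      _ = ENNReal.ofReal A * ∫⁻ x, n2 x * F' x := by
          rw [← lintegral_const_mul' _ _ ENNReal.ofReal_ne_top]
          congr 1; funext x; ring
      _ = ENNReal.ofReal A * ENNReal.ofReal E := by rw [hFE]
  have hIq : ∫⁻ x, n2 x ∂μq ≤ ENNReal.ofReal B * ENNReal.ofReal E := by
    rw [hμqdef, lintegral_withDensity_eq_lintegral_mul _ hqm hn2m]
    calc ∫⁻ x, (q * n2) x ≤ ∫⁻ x, (ENNReal.ofReal B * F' x) * n2 x := by
          refine lintegral_mono_ae ?_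
          filter_upwards [hqB] with x hx
          exact mul_le_mul_left hx _
      _ = ENNReal.ofReal B * ∫⁻ x, n2 x * F' x := by
          rw [← lintegral_const_mul' _ _ ENNReal.ofReal_ne_top]
          congr 1; funext x; ring
      _ = ENNReal.ofReal B * ENNReal.ofReal E := by rw [hFE]
  -- the target set and lower bound
  have hRHS : 0 ≤ 2 * (A + B) * E := by positivity
  rw [W2sq]
  by_cases hε0 : ε = 0
  · -- degenerate case: the two measures agree
    have hpq0 : p =ᵐ[volume] 0 :=
      (lintegral_eq_zero_iff hpm).mp (by rw [← hεdef]; exact hε0)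
    have hqq0 : q =ᵐ[volume] 0 :=
      (lintegral_eq_zero_iff hqm).mp (by rw [hqε]; exact hε0)
    have hFG : F' =ᵐ[volume] G' := by
      filter_upwards [hpq0, hqq0] with x hp hq
      have h1 : F' x ≤ G' x := (tsub_eq_zero_iff_le.mp hp).trans (min_le_right _ _)
      have h2 : G' x ≤ F' x := (tsub_eq_zero_iff_le.mp hq).trans (min_le_left _ _)
      exact le_antisymm h1 h2
    have hμFG : volume.withDensity F' = volume.withDensity G' := withDensity_congr_ae hFG
    set diag : EuclideanSpace ℝ (Fin d) → EuclideanSpace ℝ (Fin d) × EuclideanSpace ℝ (Fin d) :=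
      fun x => (x, x) with hdiagdef
    have hdiagm : Measurable diag := measurable_id.prodMk measurable_id
    set γ := (volume.withDensity F').map diag with hγdef
    haveI : IsProbabilityMeasure (volume.withDensity F') := ⟨by
      rw [withDensity_apply _ MeasurableSet.univ, setLIntegral_univ, hFint]⟩
    haveI hγprob : IsProbabilityMeasure γ := Measure.isProbabilityMeasure_map hdiagm.aemeasurable
    have hmarg1 : γ.map Prod.fst = volume.withDensity F := by
      rw [hγdef, Measure.map_map measurable_fst hdiagm]
      have h1 : Prod.fst ∘ diag = id := rfl
      rw [h1, Measure.map_id]; exact hμF.symm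
    have hmarg2 : γ.map Prod.snd = volume.withDensity G := by
      rw [hγdef, Measure.map_map measurable_snd hdiagm]
      have h1 : Prod.snd ∘ diag = id := rfl
      rw [h1, Measure.map_id]; exact hμFG.trans hμG.symm
    have hcost : ∫ z, ‖z.1 - z.2‖ ^ 2 ∂γ = 0 := by
      rw [hγdef, integral_map (f := fun z : EuclideanSpace ℝ (Fin d) × EuclideanSpace ℝ (Fin d) => ‖z.1 - z.2‖ ^ 2) hdiagm.aemeasurable
        ((continuous_fst.sub continuous_snd).norm.pow 2).aestronglyMeasurable]
      simp [hdiagdef]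
    calc sInf _ ≤ ∫ z, ‖z.1 - z.2‖ ^ 2 ∂γ :=
          csInf_le (W2sq_bddBelow _ _) ⟨γ, hγprob, hmarg1, hmarg2, rfl⟩
      _ = 0 := hcost
      _ ≤ 2 * (A + B) * E := hRHS

  · -- main case
    set diag : EuclideanSpace ℝ (Fin d) → EuclideanSpace ℝ (Fin d) × EuclideanSpace ℝ (Fin d) :=
      fun x => (x, x) with hdiagdef
    have hdiagm : Measurable diag := measurable_id.prodMk measurable_id
    set γ := μm.map diag + ε⁻¹ • (μp.prod μq) with hγdef
    have hγuniv : γ Set.univ = 1 := by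
      rw [hγdef]
      simp only [Measure.add_apply, Measure.smul_apply, smul_eq_mul]
      rw [Measure.map_apply hdiagm MeasurableSet.univ, Set.preimage_univ, hμmuniv,
        ← Set.univ_prod_univ, Measure.prod_prod, hμpuniv, hμquniv,
        ← mul_assoc, ENNReal.inv_mul_cancel hε0 hεne, one_mul, hpint]
      exact add_tsub_cancel_of_le hmint_le
    haveI hγprob : IsProbabilityMeasure γ := ⟨hγuniv⟩
    have hmarg1 : γ.map Prod.fst = volume.withDensity F := by
      rw [hγdef, Measure.map_add _ _ measurable_fst, Measure.map_smul,
        Measure.map_map measurable_fst hdiagm]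
      have h1 : Prod.fst ∘ diag = id := rfl
      rw [h1, Measure.map_id, Measure.map_fst_prod, hμquniv, smul_smul,
        ENNReal.inv_mul_cancel hε0 hεne, one_smul, hμF, hμmdef, hμpdef,
        ← withDensity_add_right _ hpm]
      exact congrArg _ hmp
    have hmarg2 : γ.map Prod.snd = volume.withDensity G := by
      rw [hγdef, Measure.map_add _ _ measurable_snd, Measure.map_smul,
        Measure.map_map measurable_snd hdiagm]
      have h1 : Prod.snd ∘ diag = id := rfl
      rw [h1, Measure.map_id, Measure.map_snd_prod, hμpuniv, smul_smul,
        ENNReal.inv_mul_cancel hε0 hεne, one_smul, hμG, hμmdef, hμqdef,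
        ← withDensity_add_right _ hqm]
      exact congrArg _ hmq
    -- cost bound
    have hcostm : Measurable fun z : EuclideanSpace ℝ (Fin d) × EuclideanSpace ℝ (Fin d) =>
        ENNReal.ofReal (‖z.1 - z.2‖ ^ 2) :=
      ENNReal.measurable_ofReal.comp ((measurable_fst.sub measurable_snd).norm.pow_const 2)
    have hL : ∫⁻ z, ENNReal.ofReal (‖z.1 - z.2‖ ^ 2) ∂γ ≤ ENNReal.ofReal (2 * (A + B) * E) := by
      rw [hγdef, lintegral_add_measure, lintegral_smul_measure,
        lintegral_map hcostm hdiagm]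
      have hd0 : ∫⁻ x, ENNReal.ofReal (‖(diag x).1 - (diag x).2‖ ^ 2) ∂μm = 0 := by
        simp [hdiagdef]
      rw [hd0, zero_add]
      have hprodle : ∫⁻ z, ENNReal.ofReal (‖z.1 - z.2‖ ^ 2) ∂(μp.prod μq)
          ≤ (2 * ∫⁻ x, n2 x ∂μp + 2 * ∫⁻ x, n2 x ∂μq) * ε := by
        have hptwise : ∀ z : EuclideanSpace ℝ (Fin d) × EuclideanSpace ℝ (Fin d),
            ENNReal.ofReal (‖z.1 - z.2‖ ^ 2) ≤ 2 * n2 z.1 + 2 * n2 z.2 := by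
          intro z
          have h1 : ‖z.1 - z.2‖ ^ 2 ≤ 2 * ‖z.1‖ ^ 2 + 2 * ‖z.2‖ ^ 2 := by
            have h2 := norm_sub_le z.1 z.2
            have h3 : ‖z.1 - z.2‖ ^ 2 ≤ (‖z.1‖ + ‖z.2‖) ^ 2 :=
              pow_le_pow_left₀ (norm_nonneg _) h2 2
            nlinarith [sq_nonneg (‖z.1‖ - ‖z.2‖)]
          calc ENNReal.ofReal (‖z.1 - z.2‖ ^ 2)
              ≤ ENNReal.ofReal (2 * ‖z.1‖ ^ 2 + 2 * ‖z.2‖ ^ 2) := ENNReal.ofReal_le_ofReal h1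
            _ = 2 * n2 z.1 + 2 * n2 z.2 := by
                rw [ENNReal.ofReal_add (by positivity) (by positivity),
                  ENNReal.ofReal_mul (by norm_num), ENNReal.ofReal_mul (by norm_num)]
                norm_num [hn2def]
        calc ∫⁻ z, ENNReal.ofReal (‖z.1 - z.2‖ ^ 2) ∂(μp.prod μq)
            ≤ ∫⁻ z, (2 * n2 z.1 + 2 * n2 z.2) ∂(μp.prod μq) := lintegral_mono hptwise
          _ = (2 * ∫⁻ x, n2 x ∂μp + 2 * ∫⁻ x, n2 x ∂μq) * ε := by
              have hmz : Measurable fun z : EuclideanSpace ℝ (Fin d) × EuclideanSpace ℝ (Fin d) =>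
                  2 * n2 z.1 + 2 * n2 z.2 :=
                ((hn2m.comp measurable_fst).const_mul 2).add ((hn2m.comp measurable_snd).const_mul 2)
              rw [lintegral_prod _ hmz.aemeasurable]
              have hinner : ∀ x, (∫⁻ y, (2 * n2 x + 2 * n2 y) ∂μq)
                  = 2 * n2 x * ε + 2 * ∫⁻ x, n2 x ∂μq := by
                intro x
                rw [lintegral_add_left measurable_const, lintegral_const, hμquniv,
                  lintegral_const_mul _ hn2m]
              rw [lintegral_congr hinner, lintegral_add_right _ measurable_const,
                lintegral_const, hμpuniv, lintegral_mul_const' _ _ hεne,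
                lintegral_const_mul' _ _ (by norm_num)]
              ring
      calc ε⁻¹ * ∫⁻ z, ENNReal.ofReal (‖z.1 - z.2‖ ^ 2) ∂(μp.prod μq)
          ≤ ε⁻¹ * ((2 * ∫⁻ x, n2 x ∂μp + 2 * ∫⁻ x, n2 x ∂μq) * ε) :=
            mul_le_mul_right hprodle _
        _ = (ε⁻¹ * ε) * (2 * ∫⁻ x, n2 x ∂μp + 2 * ∫⁻ x, n2 x ∂μq) := by ring
        _ = 2 * ∫⁻ x, n2 x ∂μp + 2 * ∫⁻ x, n2 x ∂μq := by
            rw [ENNReal.inv_mul_cancel hε0 hεne, one_mul]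
        _ ≤ 2 * (ENNReal.ofReal A * ENNReal.ofReal E)
            + 2 * (ENNReal.ofReal B * ENNReal.ofReal E) := by
            gcongr
        _ = ENNReal.ofReal (2 * (A + B) * E) := by
            rw [show 2 * (A + B) * E = 2 * (A * E) + 2 * (B * E) by ring,
              ENNReal.ofReal_add (by positivity) (by positivity),
              ENNReal.ofReal_mul (by norm_num : (0:ℝ) ≤ 2),
              ENNReal.ofReal_mul (by norm_num : (0:ℝ) ≤ 2),
              ENNReal.ofReal_mul hA, ENNReal.ofReal_mul hB]
            norm_num
    have hcost : ∫ z, ‖z.1 - z.2‖ ^ 2 ∂γ ≤ 2 * (A + B) * E := by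
      rw [integral_eq_lintegral_of_nonneg_ae (f := fun z : EuclideanSpace ℝ (Fin d) × EuclideanSpace ℝ (Fin d) => ‖z.1 - z.2‖ ^ 2) (ae_of_all _ fun z => by positivity)
        ((continuous_fst.sub continuous_snd).norm.pow 2).aestronglyMeasurable]
      exact ENNReal.toReal_le_of_le_ofReal hRHS hL
    refine le_trans (csInf_le (W2sq_bddBelow _ _) ?_) hcost
    exact ⟨γ, hγprob, hmarg1, hmarg2, rfl⟩



lemma num_exp (M : ℝ) (hM0 : 0 ≤ M) (hM : M ≤ 0.05) : Real.exp (2 * M) ≤ 1 + 2.12 * M := by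
  have h := Real.exp_bound (x := 2 * M) (by rw [abs_of_nonneg (by linarith)]; linarith)
    (n := 3) (by norm_num)
  rw [abs_of_nonneg (by linarith : (0:ℝ) ≤ 2 * M)] at h
  have h2 := (abs_le.mp h).2
  norm_num [Finset.sum_range_succ, Nat.factorial] at h2
  nlinarith [mul_nonneg hM0 hM0, mul_nonneg (mul_nonneg hM0 hM0) hM0,
    mul_nonneg (mul_nonneg hM0 hM0) (sub_nonneg.2 hM), mul_nonneg hM0 (sub_nonneg.2 hM)]

theorem stmt_13 (d : ℕ) (U Uμ : EuclideanSpace ℝ (Fin d) → ℝ) (M E₂ cμ : ℝ)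
    (hM0 : 0 ≤ M) (hM : M ≤ 0.05)
    (hpert : ∀ x, |Uμ x - U x| ≤ M)
    (hnorm : ∫ x : EuclideanSpace ℝ (Fin d), Real.exp (-U x) = 1)
    (hcμ : cμ = ∫ x : EuclideanSpace ℝ (Fin d), Real.exp (-Uμ x))
    (hE2i : Integrable (fun x : EuclideanSpace ℝ (Fin d) => ‖x‖ ^ 2 * Real.exp (-U x)))
    (hE2 : ∫ x : EuclideanSpace ℝ (Fin d), ‖x‖ ^ 2 * Real.exp (-U x) = E₂) :
    W2sq (volume.withDensity fun x => ENNReal.ofReal (Real.exp (-U x)))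
        (volume.withDensity fun x => ENNReal.ofReal (Real.exp (-Uμ x) / cμ))
      ≤ 2 * (2 * M + Real.exp (2 * M) - 1) * E₂ ∧
    2 * (2 * M + Real.exp (2 * M) - 1) * E₂ ≤ 8.24 * M * E₂ := by
  have hE2nn : 0 ≤ E₂ := hE2 ▸ integral_nonneg fun x => by positivity
  have hexp1 : 1 ≤ Real.exp (2 * M) := Real.one_le_exp (by linarith)
  have hsecond : 2 * (2 * M + Real.exp (2 * M) - 1) * E₂ ≤ 8.24 * M * E₂ := by
    have h := num_exp M hM0 (by exact_mod_cast hM)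
    nlinarith [mul_nonneg hM0 hE2nn]
  refine ⟨?_, hsecond⟩
  have hfi : Integrable (fun x : EuclideanSpace ℝ (Fin d) => Real.exp (-U x)) := by
    by_contra hc
    rw [integral_undef hc] at hnorm; norm_num at hnorm
  by_cases hgint : Integrable (fun x : EuclideanSpace ℝ (Fin d) => Real.exp (-Uμ x)) volume
  · -- nondegenerate case
    have hub : ∀ x, Real.exp (-Uμ x) ≤ Real.exp M * Real.exp (-U x) := by
      intro x
      rw [← Real.exp_add]
      apply Real.exp_le_exp.2
      have := abs_le.mp (hpert x); linarith
    have hlb : ∀ x, Real.exp (-M) * Real.exp (-U x) ≤ Real.exp (-Uμ x) := by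
      intro x
      rw [← Real.exp_add]
      apply Real.exp_le_exp.2
      have := abs_le.mp (hpert x); linarith
    have hcub : cμ ≤ Real.exp M := by
      rw [hcμ]
      calc ∫ x, Real.exp (-Uμ x) ≤ ∫ x, Real.exp M * Real.exp (-U x) :=
            integral_mono hgint (hfi.const_mul _) hub
        _ = Real.exp M := by rw [integral_const_mul, hnorm, mul_one]
    have hclb : Real.exp (-M) ≤ cμ := by
      rw [hcμ]
      calc Real.exp (-M) = ∫ x, Real.exp (-M) * Real.exp (-U x) := by
            rw [integral_const_mul, hnorm, mul_one]
        _ ≤ ∫ x, Real.exp (-Uμ x) := integral_mono (hfi.const_mul _) hgint hlb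
    have hcpos : 0 < cμ := lt_of_lt_of_le (Real.exp_pos _) hclb
    have hMM1 : Real.exp (-M) / Real.exp M = Real.exp (-(2 * M)) := by
      rw [← Real.exp_sub]; congr 1; ring
    have hMM2 : Real.exp M / Real.exp (-M) = Real.exp (2 * M) := by
      rw [← Real.exp_sub]; congr 1; ring
    have hglow : ∀ x, Real.exp (-(2 * M)) * Real.exp (-U x) ≤ Real.exp (-Uμ x) / cμ := by
      intro x
      have h1 : Real.exp (-M) * Real.exp (-U x) / Real.exp M ≤ Real.exp (-Uμ x) / cμ := by
        gcongr
        all_goals first | exact hlb x | exact hcub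
      calc Real.exp (-(2 * M)) * Real.exp (-U x)
          = Real.exp (-M) / Real.exp M * Real.exp (-U x) := by rw [hMM1]
        _ = Real.exp (-M) * Real.exp (-U x) / Real.exp M := (mul_div_right_comm _ _ _).symm
        _ ≤ _ := h1
    have hgup : ∀ x, Real.exp (-Uμ x) / cμ ≤ Real.exp (2 * M) * Real.exp (-U x) := by
      intro x
      have h1 : Real.exp (-Uμ x) / cμ ≤ Real.exp M * Real.exp (-U x) / Real.exp (-M) := by
        gcongr
        all_goals first | exact hub x | exact hclb
      calc Real.exp (-Uμ x) / cμ ≤ Real.exp M * Real.exp (-U x) / Real.exp (-M) := h1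
        _ = Real.exp M / Real.exp (-M) * Real.exp (-U x) := mul_div_right_comm _ _ _
        _ = Real.exp (2 * M) * Real.exp (-U x) := by rw [hMM2]
    have haux := aux_W2 d (fun x => Real.exp (-U x)) (fun x => Real.exp (-Uμ x) / cμ)
      (2 * M) (Real.exp (2 * M) - 1) E₂
      (by linarith) (by linarith) hE2nn
      (fun x => (Real.exp_pos _).le)
      (fun x => div_nonneg (Real.exp_pos _).le hcpos.le)
      hfi (hgint.div_const cμ) hnorm
      (by rw [integral_div, ← hcμ, div_self hcpos.ne'])
      (fun x => by
        have h1 := hglow x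
        have h2 : 1 - 2 * M ≤ Real.exp (-(2 * M)) := by
          have := Real.add_one_le_exp (-(2 * M)); linarith
        have h3 := (Real.exp_pos (-U x)).le
        nlinarith)
      (fun x => by
        have h1 := hgup x
        have h3 := (Real.exp_pos (-U x)).le
        nlinarith)
      hE2i hE2
    calc W2sq _ _ ≤ 2 * (2 * M + (Real.exp (2 * M) - 1)) * E₂ := haux
      _ = 2 * (2 * M + Real.exp (2 * M) - 1) * E₂ := by ring
  · -- cμ = 0 : the second measure is zero and no coupling exists
    have hc0 : cμ = 0 := by rw [hcμ, integral_undef hgint]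
    have hν : (volume.withDensity fun x : EuclideanSpace ℝ (Fin d) =>
        ENNReal.ofReal (Real.exp (-Uμ x) / cμ)) = 0 := by
      rw [hc0]
      simp
    rw [hν, W2sq]
    have hempty : { c : ℝ | ∃ γ : Measure (EuclideanSpace ℝ (Fin d) × EuclideanSpace ℝ (Fin d)),
        IsProbabilityMeasure γ ∧ γ.map Prod.fst =
          (volume.withDensity fun x => ENNReal.ofReal (Real.exp (-U x))) ∧
        γ.map Prod.snd = 0 ∧ c = ∫ z, ‖z.1 - z.2‖ ^ 2 ∂γ } = ∅ := by
      ext c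
      simp only [Set.mem_setOf_eq, Set.mem_empty_iff_false, iff_false, not_exists]
      rintro γ ⟨hγ, -, h2, -⟩
      have h3 : γ.map Prod.snd Set.univ = 1 := by
        rw [Measure.map_apply measurable_snd MeasurableSet.univ, Set.preimage_univ,
          hγ.measure_univ]
      rw [h2] at h3
      simp at h3
    rw [hempty, Real.sInf_empty]
    nlinarith [mul_nonneg (by nlinarith : (0:ℝ) ≤ 2 * (2 * M + Real.exp (2 * M) - 1)) hE2nn]
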